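/- The moderate nets M(ℂ^{D_0}) form a subring of the ring of all nets D_0 → ℂ (with pointwise operations), the negligible nets N(ℂ^{D_0}) form an ideal of M(ℂ^{D_0}), and the quotient ring Ĉ^{D_0} = M(ℂ^{D_0})/N(ℂ^{D_0}) is a field which is algebraically closed: every polynomial of degree ≥ 1 with coefficients in Ĉ^{D_0} has a root in Ĉ^{D_0}. -/

import Mathlib

open MeasureTheory Filter

noncomputable section

/-- ℝ^d with the Euclidean norm. -/
abbrev Rd (d : ℕ) := EuclideanSpace ℝ (Fin d)

/-- The partial derivative in the `i`-th coordinate direction. -/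
noncomputable def pderivI (d : ℕ) (i : Fin d) (f : Rd d → ℂ) : Rd d → ℂ :=
  fun x => fderiv ℝ f x (EuclideanSpace.single i (1 : ℝ))

/-- The iterated partial derivative `∂^α` of multi-index order `α`. -/
noncomputable def multiDeriv (d : ℕ) (α : Fin d → ℕ) (f : Rd d → ℂ) : Rd d → ℂ :=
  ((List.ofFn fun i : Fin d => (pderivI d i)^[α i]).foldr (· ∘ ·) id) f

-- The radius of support `R_φ`.
open Classical in
noncomputable def radSupp (d : ℕ) (φ : Rd d → ℂ) : ℝ :=
  if φ = 0 then 1 else sSup {r : ℝ | ∃ x, φ x ≠ 0 ∧ r = ‖x‖}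

/-- The type of test functions `D(ℝ^d)`: smooth compactly supported `φ : ℝ^d → ℂ`. -/
def TestFun (d : ℕ) := {φ : Rd d → ℂ // ContDiff ℝ (⊤ : ℕ∞) φ ∧ HasCompactSupport φ}

/-- The directing set `D_n`. -/
def directingSet (d n : ℕ) : Set (TestFun d) :=
  {φ | (∀ x, (φ.1 x).im = 0) ∧
       (∀ x, φ.1 (-x) = φ.1 x) ∧
       radSupp d φ.1 ≤ 1 / n ∧
       (∫ x, φ.1 x) = 1 ∧
       (∀ α : Fin d → ℕ, 1 ≤ ∑ i, α i → ∑ i, α i ≤ n →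
          (∫ x, (∏ i, (x i : ℂ) ^ α i) * φ.1 x) = 0) ∧
       (∫ x, ‖φ.1 x‖) ≤ 1 + 1 / n ∧
       (∀ α : Fin d → ℕ, ∑ i, α i ≤ n → ∀ x,
          ‖multiDeriv d α φ.1 x‖ ≤ radSupp d φ.1 ^ (-(2 * ((∑ i, α i) + d) : ℤ)))}

end

/-- A property of test functions holds *almost everywhere* if the set where it holds
belongs to the ultrafilter `U`; a complex net `A : D_0 → ℂ` is *moderate* if
`|A_φ| ≤ R_φ^{−m}` a.e. for some `m ∈ ℕ`. -/
def Moderate (d : ℕ) (U : Ultrafilter (TestFun d)) (A : TestFun d → ℂ) : Prop :=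
  ∃ m : ℕ, {φ : TestFun d | ‖A φ‖ ≤ radSupp d φ.1 ^ (-(m : ℤ))} ∈ U

/-- A complex net `A : D_0 → ℂ` is *negligible* if `|A_φ| < R_φ^p` a.e. for every `p ∈ ℕ`. -/
def Negligible (d : ℕ) (U : Ultrafilter (TestFun d)) (A : TestFun d → ℂ) : Prop :=
  ∀ p : ℕ, {φ : TestFun d | ‖A φ‖ < radSupp d φ.1 ^ p} ∈ U

section AuxLemmas

open Polynomial in
lemma aux_exists_root (p : ℕ) (hp : 1 ≤ p) (a : ℕ → ℂ) (hap : a p ≠ 0) :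
    ∃ z : ℂ, ∑ k ∈ Finset.range (p+1), a k * z ^ k = 0 := by
  set f : Polynomial ℂ := ∑ k ∈ Finset.range (p+1), Polynomial.C (a k) * Polynomial.X ^ k with hf
  have hcoeff : f.coeff p = a p := by
    simp [hf, Polynomial.finset_sum_coeff, Polynomial.coeff_C_mul, Polynomial.coeff_X_pow]
  have hdeg : 0 < f.degree := by
    have h1 : p ≤ f.natDegree := Polynomial.le_natDegree_of_ne_zero (hcoeff ▸ hap)
    exact Polynomial.natDegree_pos_iff_degree_pos.mp (lt_of_lt_of_le hp h1)
  obtain ⟨z, hz⟩ := Complex.exists_root hdeg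
  exact ⟨z, by simpa [hf, Polynomial.eval_finset_sum] using hz⟩

lemma aux_root_bound (p : ℕ) (hp : 1 ≤ p) (a : ℕ → ℂ) (z : ℂ)
    (hz : ∑ k ∈ Finset.range (p+1), a k * z ^ k = 0) (hz1 : 1 < ‖z‖) :
    ‖a p‖ * ‖z‖ ≤ ∑ k ∈ Finset.range p, ‖a k‖ := by
  rw [Finset.sum_range_succ] at hz
  have h : a p * z ^ p = -∑ k ∈ Finset.range p, a k * z ^ k :=
    eq_neg_of_add_eq_zero_right hz
  have h2 : ‖a p‖ * ‖z‖ ^ p ≤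
      ∑ k ∈ Finset.range p, ‖a k‖ * ‖z‖ ^ (p-1) := by
    calc ‖a p‖ * ‖z‖ ^ p = ‖a p * z ^ p‖ := by
          rw [norm_mul, norm_pow]
      _ = ‖∑ k ∈ Finset.range p, a k * z ^ k‖ := by rw [h, norm_neg]
      _ ≤ ∑ k ∈ Finset.range p, ‖a k * z ^ k‖ := norm_sum_le _ _
      _ ≤ ∑ k ∈ Finset.range p, ‖a k‖ * ‖z‖ ^ (p-1) := by
          refine Finset.sum_le_sum fun k hk => ?_
          rw [norm_mul, norm_pow]
          refine mul_le_mul_of_nonneg_left ?_ (norm_nonneg _)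
          exact pow_le_pow_right₀ (le_of_lt hz1) (Nat.le_sub_one_of_lt (Finset.mem_range.mp hk))
  rw [← Finset.sum_mul] at h2
  have hzp : ‖z‖ ^ p = ‖z‖ * ‖z‖ ^ (p - 1) := by
    conv_lhs => rw [show p = 1 + (p - 1) by omega, pow_add, pow_one]
  rw [hzp, ← mul_assoc] at h2
  exact le_of_mul_le_mul_right h2 (pow_pos (lt_trans one_pos hz1) _)

lemma aux_zpow_eq (R : ℝ) (n : ℕ) : R ^ (-(n:ℤ)) = (R⁻¹) ^ n := by
  rw [zpow_neg, zpow_natCast, inv_pow]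

lemma aux_radSupp_pos (d : ℕ) (hd : 0 < d) (φ : TestFun d)
    (hint : (∫ x, φ.1 x) = 1) : 0 < radSupp d φ.1 := by
  classical
  have hne : φ.1 ≠ 0 := by
    intro h
    rw [h] at hint
    simp at hint
  rw [radSupp, if_neg hne]
  by_contra h
  push_neg at h
  have : Nonempty (Fin d) := ⟨⟨0, hd⟩⟩
  haveI : Nontrivial (Rd d) := inferInstance
  have hbdd : BddAbove {r : ℝ | ∃ x, φ.1 x ≠ 0 ∧ r = ‖x‖} := by
    obtain ⟨r, hr⟩ := φ.2.2.isBounded.subset_closedBall 0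
    refine ⟨r, fun y hy => ?_⟩
    obtain ⟨x, hx, rfl⟩ := hy
    have hx' : x ∈ tsupport φ.1 := subset_tsupport φ.1 (Function.mem_support.mpr hx)
    simpa [dist_zero_right] using hr hx'
  have hzero : ∀ x, φ.1 x ≠ 0 → x = 0 := by
    intro x hx
    have hmem : ‖x‖ ∈ {r : ℝ | ∃ x, φ.1 x ≠ 0 ∧ r = ‖x‖} := ⟨x, hx, rfl⟩
    have h1 : ‖x‖ ≤ 0 := le_trans (le_csSup hbdd hmem) h
    simpa using le_antisymm h1 (norm_nonneg x)
  have hae : φ.1 =ᵐ[MeasureTheory.volume] 0 := by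
    rw [Filter.eventuallyEq_iff_exists_mem]
    refine ⟨{x | φ.1 x = 0}, ?_, fun x hx => hx⟩
    rw [MeasureTheory.mem_ae_iff]
    refine MeasureTheory.measure_mono_null (fun x hx => ?_)
      (MeasureTheory.measure_singleton (0 : Rd d))
    simp only [Set.mem_compl_iff, Set.mem_setOf_eq] at hx
    exact hzero x hx
  rw [MeasureTheory.integral_congr_ae hae] at hint
  simp at hint

lemma aux_good (d : ℕ) (hd : 0 < d) (U : Ultrafilter (TestFun d))
    (hU : ∀ n : ℕ, 1 ≤ n → directingSet d n ∈ U) :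
    {φ : TestFun d | 0 < radSupp d φ.1 ∧ radSupp d φ.1 ≤ 1/2} ∈ U := by
  have h2 := hU 2 (by norm_num)
  refine Filter.mem_of_superset h2 fun φ hφ => ?_
  obtain ⟨-, -, hr, hi, -⟩ := hφ
  refine ⟨aux_radSupp_pos d hd φ hi, ?_⟩
  norm_num at hr
  exact hr

end AuxLemmas

/-- the moderate nets form a subring of `ℂ^{D_0}`, the negligible nets form an
ideal of the moderate nets, and the quotient `Ĉ^{D_0} = M(ℂ^{D_0})/N(ℂ^{D_0})` is an
algebraically closed field (every nonzero class has an inverse, and every polynomial of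
degree `p ≥ 1` over the quotient has a root), all stated elementwise on representatives. -/


theorem moderate_negligible_quotient_algebraically_closed_field
    (d : ℕ) (hd : 0 < d) (U : Ultrafilter (TestFun d))
    (hU : ∀ n : ℕ, 1 ≤ n → directingSet d n ∈ U) :
    -- M(ℂ^{D_0}) is a subring of ℂ^{D_0}
    (Moderate d U 1 ∧ Moderate d U 0 ∧
      ∀ A B : TestFun d → ℂ, Moderate d U A → Moderate d U B →
        Moderate d U (A + B) ∧ Moderate d U (A * B) ∧ Moderate d U (-A)) ∧
    -- N(ℂ^{D_0}) is an ideal of M(ℂ^{D_0})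
    ((∀ A : TestFun d → ℂ, Negligible d U A → Moderate d U A) ∧
      Negligible d U 0 ∧
      (∀ A B : TestFun d → ℂ, Negligible d U A → Negligible d U B → Negligible d U (A + B)) ∧
      (∀ A : TestFun d → ℂ, Negligible d U A → Negligible d U (-A)) ∧
      (∀ A B : TestFun d → ℂ, Moderate d U A → Negligible d U B → Negligible d U (A * B))) ∧
    -- the quotient is a field
    (∀ A : TestFun d → ℂ, Moderate d U A → ¬ Negligible d U A →
      ∃ B : TestFun d → ℂ, Moderate d U B ∧ Negligible d U (A * B - 1)) ∧
    -- the quotient is algebraically closed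
    (∀ p : ℕ, 1 ≤ p → ∀ a : ℕ → TestFun d → ℂ,
      (∀ k ≤ p, Moderate d U (a k)) → ¬ Negligible d U (a p) →
      ∃ X : TestFun d → ℂ, Moderate d U X ∧
        Negligible d U (fun φ => ∑ k ∈ Finset.range (p + 1), a k φ * X φ ^ k)) := by
  classical
  have hG : {φ : TestFun d | 0 < radSupp d φ.1 ∧ radSupp d φ.1 ≤ 1/2} ∈ U :=
    aux_good d hd U hU
  -- basic consequences on the good set
  have hinv2 : ∀ R : ℝ, 0 < R → R ≤ 1/2 → (2:ℝ) ≤ R⁻¹ := by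
    intro R h0 h2
    have := one_div_le_one_div_of_le h0 h2
    simpa [one_div] using this
  have hinv1 : ∀ R : ℝ, 0 < R → R ≤ 1/2 → (1:ℝ) ≤ R⁻¹ := by
    intro R h0 h2
    linarith [hinv2 R h0 h2]
  have hanti : ∀ R : ℝ, 0 < R → R ≤ 1/2 → ∀ {m n : ℕ}, m ≤ n →
      R ^ (-(m:ℤ)) ≤ R ^ (-(n:ℤ)) := by
    intro R h0 h2 m n hmn
    rw [aux_zpow_eq, aux_zpow_eq]
    exact pow_le_pow_right₀ (hinv1 R h0 h2) hmn
  refine ⟨⟨?_, ?_, ?_⟩, ⟨?_, ?_, ?_, ?_, ?_⟩, ?_, ?_⟩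
  · -- Moderate 1
    exact ⟨0, Filter.mem_of_superset hG fun φ _ => by simp⟩
  · -- Moderate 0
    exact ⟨0, Filter.mem_of_superset hG fun φ _ => by simp⟩
  · -- add, mul, neg moderate
    rintro A B ⟨m, hA⟩ ⟨n, hB⟩
    refine ⟨⟨m + n + 1, ?_⟩, ⟨m + n, ?_⟩, ⟨m, ?_⟩⟩
    · filter_upwards [hG, hA, hB] with φ hφ hAφ hBφ
      obtain ⟨h0, h2⟩ := hφ
      set R := radSupp d φ.1
      have e1 : R ^ (-(m:ℤ)) ≤ R ^ (-((m+n):ℤ)) := by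
        exact_mod_cast hanti R h0 h2 (Nat.le_add_right m n)
      have e2 : R ^ (-(n:ℤ)) ≤ R ^ (-((m+n):ℤ)) := by
        exact_mod_cast hanti R h0 h2 (Nat.le_add_left n m)
      have e3 : R ^ (-((m+n+1:ℕ):ℤ)) = R⁻¹ * R ^ (-((m+n:ℕ):ℤ)) := by
        rw [aux_zpow_eq, aux_zpow_eq, pow_succ']
      have e4 : (2:ℝ) * R ^ (-((m+n:ℕ):ℤ)) ≤ R⁻¹ * R ^ (-((m+n:ℕ):ℤ)) :=
        mul_le_mul_of_nonneg_right (hinv2 R h0 h2) (zpow_nonneg h0.le _)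
      have habs : ‖(A + B) φ‖ ≤ ‖A φ‖ + ‖B φ‖ :=
        norm_add_le _ _
      have : ((m:ℤ)+(n:ℤ)) = ((m+n:ℕ):ℤ) := by push_cast; ring
      rw [e3]
      push_cast at e1 e2 e4 ⊢
      linarith
    · filter_upwards [hG, hA, hB] with φ hφ hAφ hBφ
      obtain ⟨h0, h2⟩ := hφ
      set R := radSupp d φ.1
      have key : R ^ (-(m:ℤ)) * R ^ (-(n:ℤ)) = R ^ (-((m+n:ℕ):ℤ)) := by
        rw [← zpow_add₀ h0.ne']
        congr 1
        push_cast
        ring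
      rw [← key, Pi.mul_apply, norm_mul]
      exact mul_le_mul hAφ hBφ (norm_nonneg _) (zpow_nonneg h0.le _)
    · filter_upwards [hA] with φ hAφ
      rw [Pi.neg_apply, norm_neg]
      exact hAφ
  · -- Negligible → Moderate
    rintro A hA
    refine ⟨0, ?_⟩
    filter_upwards [hA 0] with φ hφ
    simp only [pow_zero] at hφ
    simpa using hφ.le
  · -- Negligible 0
    intro p
    filter_upwards [hG] with φ hφ
    simpa using pow_pos hφ.1 p
  · -- add negligible
    rintro A B hA hB p
    filter_upwards [hG, hA (p+1), hB (p+1)] with φ hφ hAφ hBφ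
    obtain ⟨h0, h2⟩ := hφ
    set R := radSupp d φ.1
    have habs : ‖(A + B) φ‖ ≤ ‖A φ‖ + ‖B φ‖ :=
      norm_add_le _ _
    have e1 : R ^ (p+1) = R * R ^ p := by rw [pow_succ']
    have e2 : 2 * (R * R ^ p) ≤ R ^ p := by
      nlinarith [pow_nonneg h0.le p, pow_pos h0 p]
    rw [e1] at hAφ hBφ
    linarith
  · -- neg negligible
    rintro A hA p
    filter_upwards [hA p] with φ hφ
    rw [Pi.neg_apply, norm_neg]
    exact hφ
  · -- moderate * negligible
    rintro A B ⟨m, hA⟩ hB p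
    filter_upwards [hG, hA, hB (p+m)] with φ hφ hAφ hBφ
    obtain ⟨h0, h2⟩ := hφ
    set R := radSupp d φ.1
    have key : R ^ (-(m:ℤ)) * R ^ (p+m) = R ^ p := by
      rw [← zpow_natCast R (p+m), ← zpow_natCast R p, ← zpow_add₀ h0.ne']
      congr 1
      push_cast
      ring
    simp only [Set.mem_setOf_eq, Pi.mul_apply, norm_mul] at hAφ hBφ ⊢
    calc ‖A φ‖ * ‖B φ‖
        ≤ R ^ (-(m:ℤ)) * ‖B φ‖ :=
          mul_le_mul_of_nonneg_right hAφ (norm_nonneg _)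
      _ < R ^ (-(m:ℤ)) * R ^ (p+m) :=
          (mul_lt_mul_iff_right₀ (zpow_pos h0 _)).mpr hBφ
      _ = R ^ p := key
  · -- field
    rintro A ⟨m, hA⟩ hN
    rw [Negligible] at hN
    push_neg at hN
    obtain ⟨q, hq⟩ := hN
    have hq' : {φ : TestFun d | radSupp d φ.1 ^ q ≤ ‖A φ‖} ∈ U := by
      have hc := (Ultrafilter.compl_mem_iff_notMem).mpr hq
      refine Filter.mem_of_superset hc fun φ hφ => ?_
      simpa [not_lt] using hφ
    refine ⟨fun φ => (A φ)⁻¹, ⟨q, ?_⟩, ?_⟩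
    · filter_upwards [hG, hq'] with φ hφ hqφ
      obtain ⟨h0, h2⟩ := hφ
      set R := radSupp d φ.1
      rw [norm_inv, aux_zpow_eq, inv_pow, ← one_div, ← one_div]
      exact one_div_le_one_div_of_le (pow_pos h0 q) hqφ
    · intro pp
      filter_upwards [hG, hq'] with φ hφ hqφ
      obtain ⟨h0, h2⟩ := hφ
      have hA0 : A φ ≠ 0 := by
        intro h
        rw [h] at hqφ
        simp at hqφ
        linarith [pow_pos h0 q]
      have : (A * (fun φ => (A φ)⁻¹) - 1) φ = 0 := by
        simp [mul_inv_cancel₀ hA0]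
      rw [this]
      simpa using pow_pos h0 pp
  · -- algebraically closed
    rintro p hp a ha hN
    rw [Negligible] at hN
    push_neg at hN
    obtain ⟨q, hq⟩ := hN
    have hq' : {φ : TestFun d | radSupp d φ.1 ^ q ≤ ‖a p φ‖} ∈ U := by
      have hc := (Ultrafilter.compl_mem_iff_notMem).mpr hq
      refine Filter.mem_of_superset hc fun φ hφ => ?_
      simpa [not_lt] using hφ
    have hm : ∀ k, ∃ m : ℕ, k ≤ p →
        {φ : TestFun d | ‖a k φ‖ ≤ radSupp d φ.1 ^ (-(m:ℤ))} ∈ U := by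
      intro k
      by_cases h : k ≤ p
      · obtain ⟨m, hm⟩ := ha k h
        exact ⟨m, fun _ => hm⟩
      · exact ⟨0, fun h' => absurd h' h⟩
    choose m hm using hm
    set M := (Finset.range (p+1)).sup m with hM
    have hS : {φ : TestFun d | 0 < radSupp d φ.1 ∧ radSupp d φ.1 ≤ 1/2 ∧
        ∀ k ≤ p, ‖a k φ‖ ≤ radSupp d φ.1 ^ (-(M:ℤ))} ∈ U := by
      have hS0 : (⋂ k ∈ Finset.range (p+1),
          {φ : TestFun d | ‖a k φ‖ ≤ radSupp d φ.1 ^ (-(m k:ℤ))}) ∈ U := by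
        rw [← Ultrafilter.mem_coe]
        exact (Filter.biInter_finset_mem _).mpr fun k hk =>
          hm k (Nat.lt_succ_iff.mp (Finset.mem_range.mp hk))
      filter_upwards [hG, hS0] with φ hφ hSφ
      obtain ⟨h0, h2⟩ := hφ
      refine ⟨h0, h2, fun k hk => ?_⟩
      have hk' : k ∈ Finset.range (p+1) := Finset.mem_range.mpr (by omega)
      have h1 : ‖a k φ‖ ≤ radSupp d φ.1 ^ (-(m k:ℤ)) := by
        have := Set.mem_iInter₂.mp hSφ k hk'
        exact this
      exact h1.trans (hanti _ h0 h2 (Finset.le_sup hk'))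
    -- the root net
    set X : TestFun d → ℂ := fun φ =>
      if h : ∃ z : ℂ, ∑ k ∈ Finset.range (p+1), a k φ * z ^ k = 0 then h.choose else 0
      with hX
    have hroot : ∀ φ : TestFun d, a p φ ≠ 0 →
        ∑ k ∈ Finset.range (p+1), a k φ * X φ ^ k = 0 := by
      intro φ hap
      have hex : ∃ z : ℂ, ∑ k ∈ Finset.range (p+1), a k φ * z ^ k = 0 :=
        aux_exists_root p hp _ hap
      rw [hX]
      simp only [dif_pos hex]
      exact hex.choose_spec
    have hap_ne : ∀ φ : TestFun d, 0 < radSupp d φ.1 →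
        radSupp d φ.1 ^ q ≤ ‖a p φ‖ → a p φ ≠ 0 := by
      intro φ h0 hb h
      rw [h] at hb
      simp at hb
      linarith [pow_pos h0 q]
    refine ⟨X, ⟨M + q + p + 1, ?_⟩, ?_⟩
    · filter_upwards [hS, hq'] with φ hSφ hqφ
      obtain ⟨h0, h2, hbnd⟩ := hSφ
      set R := radSupp d φ.1 with hR
      set t := R⁻¹ with ht
      have ht2 : (2:ℝ) ≤ t := hinv2 R h0 h2
      have ht0 : (0:ℝ) < t := lt_of_lt_of_le (by norm_num) ht2
      have ht1 : (1:ℝ) ≤ t := by linarith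
      rw [aux_zpow_eq]
      by_cases h1 : ‖X φ‖ ≤ 1
      · exact h1.trans (one_le_pow₀ ht1)
      · push_neg at h1
        have hap : a p φ ≠ 0 := hap_ne φ h0 hqφ
        have hz := hroot φ hap
        have hb := aux_root_bound p hp (fun k => a k φ) (X φ) hz h1
        have hsum : ∑ k ∈ Finset.range p, ‖a k φ‖ ≤ (p:ℝ) * t ^ M := by
          calc ∑ k ∈ Finset.range p, ‖a k φ‖
              ≤ ∑ _k ∈ Finset.range p, t ^ M := by
                refine Finset.sum_le_sum fun k hk => ?_
                have := hbnd k (Finset.mem_range.mp hk).le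
                rwa [aux_zpow_eq] at this
            _ = (p:ℝ) * t ^ M := by
                rw [Finset.sum_const, Finset.card_range, nsmul_eq_mul]
        have hb2 : R ^ q * ‖X φ‖ ≤ (p:ℝ) * t ^ M :=
          le_trans (mul_le_mul_of_nonneg_right hqφ (norm_nonneg _)) (hb.trans hsum)
        have hRt : R * t = 1 := mul_inv_cancel₀ h0.ne'
        have htp : (p:ℝ) ≤ t ^ (p+1) := by
          have h2p : (p:ℝ) ≤ 2 ^ (p+1) := by
            exact_mod_cast (Nat.lt_two_pow_self (n := p)).le.trans (Nat.pow_le_pow_right (by norm_num) (Nat.le_succ p))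
          exact h2p.trans (pow_le_pow_left₀ (by norm_num) ht2 _)
        calc ‖X φ‖ = ‖X φ‖ * ((R * t) ^ q) := by
              rw [hRt, one_pow, mul_one]
          _ = (R ^ q * ‖X φ‖) * t ^ q := by rw [mul_pow]; ring
          _ ≤ ((p:ℝ) * t ^ M) * t ^ q :=
              mul_le_mul_of_nonneg_right hb2 (pow_nonneg ht0.le q)
          _ ≤ ((t:ℝ) ^ (p+1) * t ^ M) * t ^ q :=
              mul_le_mul_of_nonneg_right
                (mul_le_mul_of_nonneg_right htp (pow_nonneg ht0.le M))
                (pow_nonneg ht0.le q)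
          _ = t ^ (M + q + p + 1) := by
              rw [← pow_add, ← pow_add]
              congr 1
              omega
    · intro pp
      filter_upwards [hG, hq'] with φ hφ hqφ
      obtain ⟨h0, h2⟩ := hφ
      have hap : a p φ ≠ 0 := hap_ne φ h0 hqφ
      have hz := hroot φ hap
      rw [hz]
      simpa using pow_pos h0 pp
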